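/- For all g, h ∈ D₃, the local Hamiltonian 𝔥 commutes with the coproduct action: 𝔥 · Δ(g h*) = Δ(g h*) · 𝔥 as 9×9 matrices. -/

import Mathlib

open Matrix
open scoped Kronecker

noncomputable section

/-- π(σ): 3×3 matrix with rows (0,1,0),(0,0,1),(1,0,0). -/
def Smat : Matrix (Fin 3) (Fin 3) ℂ := !![0,1,0; 0,0,1; 1,0,0]

/-- π(τ): 3×3 matrix with rows (1,0,0),(0,0,1),(0,1,0). -/
def Tmat : Matrix (Fin 3) (Fin 3) ℂ := !![1,0,0; 0,0,1; 0,1,0]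

/-- The representation π_{(3,+)} on group elements of D₃ = DihedralGroup 3,
extended multiplicatively from π(σ) = Smat, π(τ) = Tmat.
Here `DihedralGroup.r i` = σ^i and `DihedralGroup.sr i` = τσ^i. -/
def pig : DihedralGroup 3 → Matrix (Fin 3) (Fin 3) ℂ
  | DihedralGroup.r i => Smat ^ i.val
  | DihedralGroup.sr i => Tmat * Smat ^ i.val

/-- The representation π_{(3,+)} on dual elements: π((σ^i)*) = 0 and
π((σ^i τ)*) = E^{i+1}_{i+1}.  Since σ^i τ = `DihedralGroup.sr (-i)`, the dual
of `sr j` acts as the matrix unit at position (-j).val. -/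
def pidual : DihedralGroup 3 → Matrix (Fin 3) (Fin 3) ℂ
  | DihedralGroup.r _ => 0
  | DihedralGroup.sr j =>
      Matrix.single ⟨(-j).val, ZMod.val_lt _⟩ ⟨(-j).val, ZMod.val_lt _⟩ 1

/-- The coproduct action Δ(g h*) on ℂ³⊗ℂ³. -/
def copr (g h : DihedralGroup 3) : Matrix (Fin 3 × Fin 3) (Fin 3 × Fin 3) ℂ :=
  ∑ k : DihedralGroup 3, (pig g * pidual (k⁻¹ * h)) ⊗ₖ (pig g * pidual k)

/-- The local two-site Hamiltonian 𝔥 = Σ_γ i(E^{γ(1)}_{γ(2)} ⊗ E^{γ(2)}_{γ(3)}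
− E^{γ(2)}_{γ(3)} ⊗ E^{γ(1)}_{γ(2)}), summed over permutations γ of {1,2,3}. -/
def hloc : Matrix (Fin 3 × Fin 3) (Fin 3 × Fin 3) ℂ :=
  ∑ γ : Equiv.Perm (Fin 3),
    Complex.I •
      ((Matrix.single (γ 0) (γ 1) (1 : ℂ)) ⊗ₖ (Matrix.single (γ 1) (γ 2) (1 : ℂ))
        - (Matrix.single (γ 1) (γ 2) (1 : ℂ)) ⊗ₖ (Matrix.single (γ 0) (γ 1) (1 : ℂ)))

/-! ### Auxiliary machinery -/

/-- Matrix unit. -/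
abbrev E (i j : Fin 3) : Matrix (Fin 3) (Fin 3) ℂ := Matrix.single i j 1

/-- Explicit form of the local Hamiltonian. -/
def hE : Matrix (Fin 3 × Fin 3) (Fin 3 × Fin 3) ℂ := Complex.I • (
    E 0 1 ⊗ₖ E 1 2 - E 1 2 ⊗ₖ E 0 1
  + (E 1 0 ⊗ₖ E 0 2 - E 0 2 ⊗ₖ E 1 0)
  + (E 2 1 ⊗ₖ E 1 0 - E 1 0 ⊗ₖ E 2 1)
  + (E 0 2 ⊗ₖ E 2 1 - E 2 1 ⊗ₖ E 0 2)
  + (E 1 2 ⊗ₖ E 2 0 - E 2 0 ⊗ₖ E 1 2)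
  + (E 2 0 ⊗ₖ E 0 1 - E 0 1 ⊗ₖ E 2 0))

lemma EmulE (i j k l : Fin 3) : E i j * E k l = if j = k then E i l else 0 := by
  rcases eq_or_ne j k with h | h
  · subst h; simp [Matrix.single_mul_single_same]
  · simp [Matrix.single_mul_single_of_ne, h]

lemma Smat_eq : Smat = E 0 1 + E 1 2 + E 2 0 := by
  ext i j
  fin_cases i <;> fin_cases j <;>
    simp [Smat, Matrix.single, Fin.ext_iff, Matrix.vecHead, Matrix.vecTail]

lemma Tmat_eq : Tmat = E 0 0 + E 1 2 + E 2 1 := by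
  ext i j
  fin_cases i <;> fin_cases j <;>
    simp [Tmat, Matrix.single, Fin.ext_iff, Matrix.vecHead, Matrix.vecTail]

lemma hloc_eq : hloc = hE := by
  rw [hloc, show (Finset.univ : Finset (Equiv.Perm (Fin 3))) =
    {1, Equiv.swap 0 1, Equiv.swap 0 2, Equiv.swap 1 2,
     Equiv.swap 0 1 * Equiv.swap 1 2, Equiv.swap 1 2 * Equiv.swap 0 1} from by decide]
  rw [Finset.sum_insert (by decide), Finset.sum_insert (by decide),
    Finset.sum_insert (by decide), Finset.sum_insert (by decide),
    Finset.sum_insert (by decide), Finset.sum_singleton]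
  rw [hE]
  norm_num [Equiv.swap_apply_def, Equiv.Perm.mul_apply, smul_sub, smul_add]
  abel

lemma commS : Commute hE (Smat ⊗ₖ Smat) := by
  unfold Commute SemiconjBy
  simp only [hE, Smat_eq, smul_mul_assoc, mul_smul_comm, sub_mul, mul_sub, add_mul, mul_add,
    ← Matrix.mul_kronecker_mul, EmulE]
  norm_num [Matrix.kronecker_add, Matrix.add_kronecker, Matrix.zero_kronecker,
    Matrix.kronecker_zero, Fin.ext_iff]
  abel

lemma commT : Commute hE (Tmat ⊗ₖ Tmat) := by
  unfold Commute SemiconjBy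
  simp only [hE, Tmat_eq, smul_mul_assoc, mul_smul_comm, sub_mul, mul_sub, add_mul, mul_add,
    ← Matrix.mul_kronecker_mul, EmulE]
  norm_num [Matrix.kronecker_add, Matrix.add_kronecker, Matrix.zero_kronecker,
    Matrix.kronecker_zero, Fin.ext_iff]
  abel

lemma commD0 : Commute hE (E 0 0 ⊗ₖ E 0 0 + E 1 1 ⊗ₖ E 1 1 + E 2 2 ⊗ₖ E 2 2) := by
  unfold Commute SemiconjBy
  simp only [hE, smul_mul_assoc, mul_smul_comm, sub_mul, mul_sub, add_mul, mul_add,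
    ← Matrix.mul_kronecker_mul, EmulE]
  norm_num [Matrix.zero_kronecker, Matrix.kronecker_zero, Fin.ext_iff]

lemma commD1 : Commute hE (E 2 2 ⊗ₖ E 0 0 + E 1 1 ⊗ₖ E 2 2 + E 0 0 ⊗ₖ E 1 1) := by
  unfold Commute SemiconjBy
  simp only [hE, smul_mul_assoc, mul_smul_comm, sub_mul, mul_sub, add_mul, mul_add,
    ← Matrix.mul_kronecker_mul, EmulE]
  norm_num [Matrix.zero_kronecker, Matrix.kronecker_zero, Fin.ext_iff]
  abel

lemma commD2 : Commute hE (E 1 1 ⊗ₖ E 0 0 + E 0 0 ⊗ₖ E 2 2 + E 2 2 ⊗ₖ E 1 1) := by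
  unfold Commute SemiconjBy
  simp only [hE, smul_mul_assoc, mul_smul_comm, sub_mul, mul_sub, add_mul, mul_add,
    ← Matrix.mul_kronecker_mul, EmulE]
  norm_num [Matrix.zero_kronecker, Matrix.kronecker_zero, Fin.ext_iff]
  abel

/-- The dual part of the coproduct. -/
def Dmat (h : DihedralGroup 3) : Matrix (Fin 3 × Fin 3) (Fin 3 × Fin 3) ℂ :=
  ∑ k : DihedralGroup 3, pidual (k⁻¹ * h) ⊗ₖ pidual k

lemma copr_eq (g h : DihedralGroup 3) : copr g h = (pig g ⊗ₖ pig g) * Dmat h := by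
  rw [copr, Dmat, Finset.mul_sum]
  exact Finset.sum_congr rfl fun k _ => Matrix.mul_kronecker_mul _ _ _ _

lemma pidual_r (i : ZMod 3) : pidual (.r i) = 0 := rfl
lemma pidual_sr0 : pidual (.sr 0) = E 0 0 := rfl
lemma pidual_sr1 : pidual (.sr 1) = E 2 2 := rfl
lemma pidual_sr2 : pidual (.sr 2) = E 1 1 := rfl

lemma sr_inv (i : ZMod 3) : (DihedralGroup.sr i)⁻¹ = .sr i :=
  inv_eq_of_mul_eq_one_right (DihedralGroup.sr_mul_self i)

lemma Dmat_sr (i : ZMod 3) : Dmat (.sr i) = 0 := by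
  rw [Dmat]
  apply Finset.sum_eq_zero
  rintro (j | j) _
  · simp [pidual_r, Matrix.kronecker_zero]
  · rw [sr_inv, DihedralGroup.sr_mul_sr]
    simp [pidual_r, Matrix.zero_kronecker]

lemma univD3 : (Finset.univ : Finset (DihedralGroup 3)) =
    {.r 0, .r 1, .r 2, .sr 0, .sr 1, .sr 2} := by decide

lemma Dmat_r0 : Dmat (.r 0) = E 0 0 ⊗ₖ E 0 0 + E 1 1 ⊗ₖ E 1 1 + E 2 2 ⊗ₖ E 2 2 := by
  rw [Dmat, univD3, Finset.sum_insert (by decide), Finset.sum_insert (by decide),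
    Finset.sum_insert (by decide), Finset.sum_insert (by decide),
    Finset.sum_insert (by decide), Finset.sum_singleton,
    show ((DihedralGroup.sr 0 : DihedralGroup 3))⁻¹ * .r 0 = .sr 0 from by decide,
    show ((DihedralGroup.sr 1 : DihedralGroup 3))⁻¹ * .r 0 = .sr 1 from by decide,
    show ((DihedralGroup.sr 2 : DihedralGroup 3))⁻¹ * .r 0 = .sr 2 from by decide]
  simp only [pidual_r, pidual_sr0, pidual_sr1, pidual_sr2,
    Matrix.kronecker_zero, Matrix.zero_kronecker]
  abel

lemma Dmat_r1 : Dmat (.r 1) = E 2 2 ⊗ₖ E 0 0 + E 1 1 ⊗ₖ E 2 2 + E 0 0 ⊗ₖ E 1 1 := by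
  rw [Dmat, univD3, Finset.sum_insert (by decide), Finset.sum_insert (by decide),
    Finset.sum_insert (by decide), Finset.sum_insert (by decide),
    Finset.sum_insert (by decide), Finset.sum_singleton,
    show ((DihedralGroup.sr 0 : DihedralGroup 3))⁻¹ * .r 1 = .sr 1 from by decide,
    show ((DihedralGroup.sr 1 : DihedralGroup 3))⁻¹ * .r 1 = .sr 2 from by decide,
    show ((DihedralGroup.sr 2 : DihedralGroup 3))⁻¹ * .r 1 = .sr 0 from by decide]
  simp only [pidual_r, pidual_sr0, pidual_sr1, pidual_sr2,
    Matrix.kronecker_zero, Matrix.zero_kronecker]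
  abel

lemma Dmat_r2 : Dmat (.r 2) = E 1 1 ⊗ₖ E 0 0 + E 0 0 ⊗ₖ E 2 2 + E 2 2 ⊗ₖ E 1 1 := by
  rw [Dmat, univD3, Finset.sum_insert (by decide), Finset.sum_insert (by decide),
    Finset.sum_insert (by decide), Finset.sum_insert (by decide),
    Finset.sum_insert (by decide), Finset.sum_singleton,
    show ((DihedralGroup.sr 0 : DihedralGroup 3))⁻¹ * .r 2 = .sr 2 from by decide,
    show ((DihedralGroup.sr 1 : DihedralGroup 3))⁻¹ * .r 2 = .sr 0 from by decide,
    show ((DihedralGroup.sr 2 : DihedralGroup 3))⁻¹ * .r 2 = .sr 1 from by decide]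
  simp only [pidual_r, pidual_sr0, pidual_sr1, pidual_sr2,
    Matrix.kronecker_zero, Matrix.zero_kronecker]
  abel

lemma commDmat (h : DihedralGroup 3) : Commute hE (Dmat h) := by
  rcases h with i | i
  · have hi : i = 0 ∨ i = 1 ∨ i = 2 := by revert i; decide
    rcases hi with rfl | rfl | rfl
    · rw [Dmat_r0]; exact commD0
    · rw [Dmat_r1]; exact commD1
    · rw [Dmat_r2]; exact commD2
  · rw [Dmat_sr]; exact Commute.zero_right _

lemma pig_r0 : pig (.r 0) = 1 := by
  show Smat ^ (0 : ZMod 3).val = 1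
  rw [show (0 : ZMod 3).val = 0 from rfl, pow_zero]
lemma pig_r1 : pig (.r 1) = Smat := by
  show Smat ^ (1 : ZMod 3).val = Smat
  rw [show (1 : ZMod 3).val = 1 from rfl, pow_one]
lemma pig_r2 : pig (.r 2) = Smat * Smat := by
  show Smat ^ (2 : ZMod 3).val = Smat * Smat
  rw [show (2 : ZMod 3).val = 2 from rfl, pow_two]
lemma pig_sr0 : pig (.sr 0) = Tmat := by
  show Tmat * Smat ^ (0 : ZMod 3).val = Tmat
  rw [show (0 : ZMod 3).val = 0 from rfl, pow_zero, mul_one]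
lemma pig_sr1 : pig (.sr 1) = Tmat * Smat := by
  show Tmat * Smat ^ (1 : ZMod 3).val = Tmat * Smat
  rw [show (1 : ZMod 3).val = 1 from rfl, pow_one]
lemma pig_sr2 : pig (.sr 2) = Tmat * (Smat * Smat) := by
  show Tmat * Smat ^ (2 : ZMod 3).val = Tmat * (Smat * Smat)
  rw [show (2 : ZMod 3).val = 2 from rfl, pow_two]

lemma commPig (g : DihedralGroup 3) : Commute hE (pig g ⊗ₖ pig g) := by
  rcases g with i | i <;>
    (have hi : i = 0 ∨ i = 1 ∨ i = 2 := by revert i; decide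
     rcases hi with rfl | rfl | rfl)
  · rw [pig_r0, Matrix.one_kronecker_one]; exact Commute.one_right _
  · rw [pig_r1]; exact commS
  · rw [pig_r2, Matrix.mul_kronecker_mul]; exact commS.mul_right commS
  · rw [pig_sr0]; exact commT
  · rw [pig_sr1, Matrix.mul_kronecker_mul]; exact commT.mul_right commS
  · rw [pig_sr2, Matrix.mul_kronecker_mul, Matrix.mul_kronecker_mul]
    exact commT.mul_right (commS.mul_right commS)

/-- the local Hamiltonian commutes with the coproduct action:
𝔥 · Δ(g h*) = Δ(g h*) · 𝔥 for all g, h ∈ D₃. -/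
theorem hloc_commutes_coproduct (g h : DihedralGroup 3) :
    hloc * copr g h = copr g h * hloc := by
  rw [hloc_eq, copr_eq]
  exact ((commPig g).mul_right (commDmat h)).eq

end
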